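/- Let $(w_t)$ be a sequence of reals satisfying $w_{t+1} \leq (1 - \frac{c_1}{(t+1)^{\delta_1}}) w_t + \frac{c_2}{(t+1)^{\delta_2}}$ with $w_t \geq 0$ for all $t$, $c_1, c_2 > 0$, $0 < \delta_1 < \delta_2 < 1$, and $c_1/(t+1)^{\delta_1} \leq 1$ for all $t$. Then for every $0 \leq \delta_0 < \delta_2 - \delta_1$, $\lim_{t\to\infty} (t+1)^{\delta_0} w_t = 0$. -/

import Mathlib

open Filter Finset Real

theorem timeVaryingConvergence_ineq
    (c1 c2 δ1 δ2 : ℝ) (hc1 : 0 < c1) (hc2 : 0 < c2)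
    (hδ1 : 0 < δ1) (hδ12 : δ1 < δ2) (hδ2 : δ2 < 1)
    (w : ℕ → ℝ) (hpos : ∀ t, 0 ≤ w t)
    (hcoef : ∀ t : ℕ, c1 / ((t : ℝ) + 1) ^ δ1 ≤ 1)
    (hw : ∀ t : ℕ, w (t + 1) ≤
      (1 - c1 / ((t : ℝ) + 1) ^ δ1) * w t + c2 / ((t : ℝ) + 1) ^ δ2) :
    ∀ δ0 : ℝ, 0 ≤ δ0 → δ0 < δ2 - δ1 →
      Filter.Tendsto (fun t : ℕ => ((t : ℝ) + 1) ^ δ0 * w t)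
        Filter.atTop (nhds 0) := by
  intro δ0 hδ0 hδ0'
  set a : ℕ → ℝ := fun t => c1 / ((t : ℝ) + 1) ^ δ1 with ha
  set u : ℕ → ℝ := fun t => ((t : ℝ) + 1) ^ δ0 * w t with hu
  have hb : ∀ t : ℕ, (0:ℝ) < (t : ℝ) + 1 := fun t => by positivity
  have hb1 : ∀ t : ℕ, (1:ℝ) ≤ (t : ℝ) + 1 := fun t => by
    have : (0:ℝ) ≤ (t:ℝ) := Nat.cast_nonneg t; linarith
  have ha_pos : ∀ t, 0 < a t := fun t => div_pos hc1 (rpow_pos_of_pos (hb t) _)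
  have hu_nonneg : ∀ t, 0 ≤ u t := fun t =>
    mul_nonneg (rpow_nonneg (hb t).le _) (hpos t)
  have htend : Tendsto (fun t : ℕ => (t : ℝ) + 1) atTop atTop :=
    tendsto_atTop_add_const_right _ 1 tendsto_natCast_atTop_atTop
  rw [Metric.tendsto_atTop]
  intro ε hε
  -- eventual conditions
  have hA : ∀ᶠ t : ℕ in atTop, 2 / c1 ≤ ((t : ℝ) + 1) ^ (1 - δ1) := by
    have := (tendsto_rpow_atTop (by linarith : (0:ℝ) < 1 - δ1)).comp htend
    exact this.eventually_ge_atTop _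
  have hB : ∀ᶠ t : ℕ in atTop,
      ((t : ℝ) + 1) ^ (-(δ2 - δ1 - δ0)) < c1 * ε / (8 * c2) := by
    have h0 := (tendsto_rpow_neg_atTop (by linarith : (0:ℝ) < δ2 - δ1 - δ0)).comp htend
    exact h0.eventually (gt_mem_nhds (by positivity))
  obtain ⟨T, hT⟩ := eventually_atTop.mp (hA.and hB)
  -- key recursion for t ≥ T
  have hkey : ∀ t, T ≤ t → u (t + 1) ≤ (1 - a t / 2) * u t + a t / 2 * (ε / 2) := by
    intro t ht
    obtain ⟨hAt, hBt⟩ := hT t ht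
    have hco : a t ≤ 1 := hcoef t
    have hbt : (0:ℝ) < ((t:ℝ)+1) ^ δ1 := rpow_pos_of_pos (hb t) _
    have hbt2 : (0:ℝ) < ((t:ℝ)+1) ^ δ2 := rpow_pos_of_pos (hb t) _
    -- step 1: u (t+1) ≤ (t+2)^δ0 * ((1 - a t) * w t + c2/(t+1)^δ2)
    have hcast : ((t+1 : ℕ) : ℝ) + 1 = (t:ℝ) + 2 := by push_cast; ring
    have h1 : u (t+1) ≤ ((t:ℝ)+2) ^ δ0 * ((1 - a t) * w t + c2 / ((t:ℝ)+1) ^ δ2) := by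
      simp only [hu, hcast]
      exact mul_le_mul_of_nonneg_left (hw t) (rpow_nonneg (by positivity) _)
    -- bound (t+2)^δ0 ≤ 2 * (t+1)^δ0 and (t+2)^δ0 ≤ (1 + 1/(t+1)) * (t+1)^δ0
    have hratio : ((t:ℝ)+2) ^ δ0 ≤ (1 + 1/((t:ℝ)+1)) * ((t:ℝ)+1) ^ δ0 := by
      have heq : (t:ℝ)+2 = (1 + 1/((t:ℝ)+1)) * ((t:ℝ)+1) := by
        field_simp; ring
      rw [heq, mul_rpow (by positivity) (hb t).le]
      apply mul_le_mul_of_nonneg_right _ (rpow_nonneg (hb t).le _)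
      calc (1 + 1/((t:ℝ)+1)) ^ δ0 ≤ (1 + 1/((t:ℝ)+1)) ^ (1:ℝ) := by
            apply rpow_le_rpow_of_exponent_le _ (by linarith)
            have : (0:ℝ) < 1/((t:ℝ)+1) := by positivity
            linarith
        _ = 1 + 1/((t:ℝ)+1) := rpow_one _
    -- 1/(t+1) ≤ a t / 2
    have hsmall : 1/((t:ℝ)+1) ≤ a t / 2 := by
      have h2 : 2 / c1 * ((t:ℝ)+1) ^ δ1 ≤ ((t:ℝ)+1) ^ (1-δ1) * ((t:ℝ)+1) ^ δ1 :=
        mul_le_mul_of_nonneg_right hAt hbt.le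
      rw [← rpow_add (hb t)] at h2
      simp only [sub_add_cancel, rpow_one] at h2
      have h3 : 2 * ((t:ℝ)+1)^δ1 ≤ c1 * ((t:ℝ)+1) := by
        have h4 := mul_le_mul_of_nonneg_left h2 hc1.le
        calc 2*((t:ℝ)+1)^δ1 = c1 * (2/c1 * ((t:ℝ)+1)^δ1) := by field_simp
          _ ≤ c1 * (((t:ℝ)+1)) := h4
      rw [ha]
      show 1/((t:ℝ)+1) ≤ c1 / ((t:ℝ)+1)^δ1 / 2
      rw [div_div, div_le_div_iff₀ (hb t) (by positivity)]
      linarith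
    -- coefficient bound
    have hcoef2 : (1 + 1/((t:ℝ)+1)) * (1 - a t) ≤ 1 - a t / 2 := by
      have h1t : (0:ℝ) ≤ 1/((t:ℝ)+1) := by positivity
      have : (1 + 1/((t:ℝ)+1)) * (1 - a t) = 1 - a t + 1/((t:ℝ)+1) * (1 - a t) := by ring
      rw [this]
      have h3 : 1/((t:ℝ)+1) * (1 - a t) ≤ 1/((t:ℝ)+1) * 1 :=
        mul_le_mul_of_nonneg_left (by linarith) h1t
      have := hsmall
      linarith
    -- noise bound
    have hnoise : ((t:ℝ)+2) ^ δ0 * (c2 / ((t:ℝ)+1) ^ δ2) ≤ a t / 2 * (ε / 2) := by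
      have h2 : ((t:ℝ)+2) ^ δ0 ≤ 2 * ((t:ℝ)+1) ^ δ0 := by
        calc ((t:ℝ)+2) ^ δ0 ≤ (2*((t:ℝ)+1)) ^ δ0 := by
              apply rpow_le_rpow (by positivity) (by linarith [hb1 t]) hδ0
          _ = 2 ^ δ0 * ((t:ℝ)+1) ^ δ0 := mul_rpow (by norm_num) (hb t).le
          _ ≤ 2 ^ (1:ℝ) * ((t:ℝ)+1) ^ δ0 := by
              apply mul_le_mul_of_nonneg_right _ (rpow_nonneg (hb t).le _)
              exact rpow_le_rpow_of_exponent_le (by norm_num) (by linarith)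
          _ = 2 * ((t:ℝ)+1) ^ δ0 := by norm_num
      have h3 : ((t:ℝ)+2) ^ δ0 * (c2 / ((t:ℝ)+1) ^ δ2)
          ≤ 2 * c2 * ((t:ℝ)+1) ^ (δ0 - δ2) := by
        rw [rpow_sub (hb t)]
        have : 2 * ((t:ℝ)+1) ^ δ0 * (c2 / ((t:ℝ)+1) ^ δ2)
            = 2 * c2 * (((t:ℝ)+1) ^ δ0 / ((t:ℝ)+1) ^ δ2) := by ring
        calc ((t:ℝ)+2) ^ δ0 * (c2 / ((t:ℝ)+1) ^ δ2)
            ≤ 2 * ((t:ℝ)+1) ^ δ0 * (c2 / ((t:ℝ)+1) ^ δ2) :=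
              mul_le_mul_of_nonneg_right h2 (by positivity)
          _ = 2 * c2 * (((t:ℝ)+1) ^ δ0 / ((t:ℝ)+1) ^ δ2) := this
      have h4 : ((t:ℝ)+1) ^ (δ0 - δ2) = ((t:ℝ)+1) ^ (-(δ2 - δ1 - δ0)) * ((t:ℝ)+1) ^ (-δ1) := by
        rw [← rpow_add (hb t)]; ring_nf
      have h5 : 2 * c2 * ((t:ℝ)+1) ^ (δ0 - δ2) ≤ a t / 2 * (ε / 2) := by
        rw [h4, ha]
        have hneg : ((t:ℝ)+1) ^ (-δ1) = (((t:ℝ)+1) ^ δ1)⁻¹ := rpow_neg (hb t).le _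
        rw [hneg]
        have h6 : 2 * c2 * (((t:ℝ)+1) ^ (-(δ2 - δ1 - δ0)) * (((t:ℝ)+1) ^ δ1)⁻¹)
            ≤ 2 * c2 * (c1 * ε / (8 * c2) * (((t:ℝ)+1) ^ δ1)⁻¹) := by
          apply mul_le_mul_of_nonneg_left _ (by positivity)
          exact mul_le_mul_of_nonneg_right hBt.le (by positivity)
        calc 2 * c2 * (((t:ℝ)+1) ^ (-(δ2 - δ1 - δ0)) * (((t:ℝ)+1) ^ δ1)⁻¹)
            ≤ 2 * c2 * (c1 * ε / (8 * c2) * (((t:ℝ)+1) ^ δ1)⁻¹) := h6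
          _ = c1 / ((t:ℝ)+1) ^ δ1 / 2 * (ε / 2) := by field_simp; ring
      exact h3.trans h5
    -- combine
    have hwnn := hpos t
    have h1a : (0:ℝ) ≤ 1 - a t := by linarith
    calc u (t+1) ≤ ((t:ℝ)+2) ^ δ0 * ((1 - a t) * w t + c2 / ((t:ℝ)+1) ^ δ2) := h1
      _ = ((t:ℝ)+2) ^ δ0 * ((1 - a t) * w t) + ((t:ℝ)+2) ^ δ0 * (c2 / ((t:ℝ)+1) ^ δ2) := by ring
      _ ≤ (1 + 1/((t:ℝ)+1)) * ((t:ℝ)+1) ^ δ0 * ((1 - a t) * w t) + a t / 2 * (ε/2) := by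
          apply add_le_add _ hnoise
          exact mul_le_mul_of_nonneg_right hratio (mul_nonneg h1a hwnn)
      _ = ((1 + 1/((t:ℝ)+1)) * (1 - a t)) * u t + a t / 2 * (ε/2) := by
          simp only [hu]; ring
      _ ≤ (1 - a t / 2) * u t + a t / 2 * (ε/2) := by
          apply add_le_add_left
          exact mul_le_mul_of_nonneg_right hcoef2 (hu_nonneg t)
  -- define m and prove decay
  set m : ℕ → ℝ := fun t => max (u t - ε / 2) 0 with hm
  have hm_nonneg : ∀ t, 0 ≤ m t := fun t => le_max_right _ _
  have hstep : ∀ t, T ≤ t → m (t + 1) ≤ (1 - a t / 2) * m t := by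
    intro t ht
    have hfac : (0:ℝ) ≤ 1 - a t / 2 := by have := hcoef t; change a t ≤ 1 at this; linarith
    apply max_le
    · have h1 : u (t+1) - ε/2 ≤ (1 - a t / 2) * (u t - ε/2) := by
        have := hkey t ht; nlinarith [hcoef t]
      calc u (t+1) - ε/2 ≤ (1 - a t / 2) * (u t - ε/2) := h1
        _ ≤ (1 - a t / 2) * m t :=
          mul_le_mul_of_nonneg_left (le_max_left _ _) hfac
    · exact mul_nonneg hfac (hm_nonneg t)
  have hexp : ∀ t, T ≤ t → m (t + 1) ≤ Real.exp (-(a t / 2)) * m t := by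
    intro t ht
    calc m (t+1) ≤ (1 - a t / 2) * m t := hstep t ht
      _ ≤ Real.exp (-(a t / 2)) * m t := by
          apply mul_le_mul_of_nonneg_right _ (hm_nonneg t)
          have := Real.add_one_le_exp (-(a t / 2)); linarith
  have hiter : ∀ n : ℕ, m (T + n) ≤ Real.exp (-(∑ i ∈ Finset.range n, a (T + i) / 2)) * m T := by
    intro n
    induction n with
    | zero => simp
    | succ n ih =>
      have : m (T + (n+1)) = m ((T + n) + 1) := by ring_nf
      rw [this]
      calc m ((T+n)+1) ≤ Real.exp (-(a (T+n) / 2)) * m (T+n) := hexp _ (Nat.le_add_right _ _)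
        _ ≤ Real.exp (-(a (T+n) / 2)) * (Real.exp (-(∑ i ∈ Finset.range n, a (T + i) / 2)) * m T) :=
            mul_le_mul_of_nonneg_left ih (Real.exp_pos _).le
        _ = Real.exp (-(∑ i ∈ Finset.range (n+1), a (T + i) / 2)) * m T := by
            rw [Finset.sum_range_succ, neg_add, Real.exp_add]
            ring
  -- divergence of the sum
  have hsumdiv : Tendsto (fun n => ∑ i ∈ Finset.range n, a (T + i) / 2) atTop atTop := by
    have hlow : ∀ n, c1/2 * (∑ i ∈ Finset.range (T + n), (1/((i:ℝ)+1))
        - ∑ i ∈ Finset.range T, (1/((i:ℝ)+1))) ≤ ∑ i ∈ Finset.range n, a (T + i) / 2 := by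
      intro n
      rw [Finset.sum_range_add]
      simp only [add_sub_cancel_left]
      rw [Finset.mul_sum]
      apply Finset.sum_le_sum
      intro i _
      have hbi : (0:ℝ) < ((T + i : ℕ):ℝ) + 1 := by positivity
      have h1 : (((T+i:ℕ):ℝ)+1) ^ δ1 ≤ ((T+i:ℕ):ℝ)+1 := by
        calc (((T+i:ℕ):ℝ)+1) ^ δ1 ≤ (((T+i:ℕ):ℝ)+1) ^ (1:ℝ) :=
              rpow_le_rpow_of_exponent_le (hb1 _) (by linarith)
          _ = ((T+i:ℕ):ℝ)+1 := rpow_one _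
      have h2 : c1 / (((T+i:ℕ):ℝ)+1) ≤ a (T+i) := by
        rw [ha]
        apply div_le_div_of_nonneg_left hc1.le (rpow_pos_of_pos hbi _) h1
      have h3 : (1:ℝ)/(((T+i:ℕ):ℝ)+1) = (1/(((T+i:ℕ):ℝ)+1)) := rfl
      push_cast
      push_cast at h2
      have h4 : c1/2 * (1/((T:ℝ)+(i:ℝ)+1)) = (c1/((T:ℝ)+(i:ℝ)+1))/2 := by ring
      linarith [h2]
    apply tendsto_atTop_mono hlow
    apply Tendsto.const_mul_atTop (by positivity : (0:ℝ) < c1/2)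
    apply tendsto_atTop_add_const_right
    have hTn : Tendsto (fun n : ℕ => T + n) atTop atTop :=
      (tendsto_add_atTop_nat T).congr (fun n => Nat.add_comm n T)
    exact Real.tendsto_sum_range_one_div_nat_succ_atTop.comp hTn
  -- conclude
  have hmz : Tendsto (fun n => Real.exp (-(∑ i ∈ Finset.range n, a (T + i) / 2)) * m T)
      atTop (nhds 0) := by
    have h0 : Tendsto (fun n => Real.exp (-(∑ i ∈ Finset.range n, a (T + i) / 2))) atTop (nhds 0) :=
      Real.tendsto_exp_atBot.comp (tendsto_neg_atTop_atBot.comp hsumdiv)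
    simpa using h0.mul_const (m T)
  have hev : ∀ᶠ n : ℕ in atTop,
      Real.exp (-(∑ i ∈ Finset.range n, a (T + i) / 2)) * m T < ε / 2 :=
    hmz.eventually (gt_mem_nhds (by positivity))
  obtain ⟨N, hN⟩ := eventually_atTop.mp hev
  refine ⟨T + N, fun t ht => ?_⟩
  have hn : ∃ n, n ≥ N ∧ t = T + n := ⟨t - T, by omega, by omega⟩
  obtain ⟨n, hnN, rfl⟩ := hn
  have h1 : m (T + n) < ε / 2 := lt_of_le_of_lt (hiter n) (hN n hnN)
  have h2 : u (T + n) - ε/2 ≤ m (T+n) := le_max_left _ _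
  rw [Real.dist_eq, sub_zero, abs_of_nonneg (hu_nonneg _)]
  show u (T+n) < ε
  linarith
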